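/- Let (Σ, dom) be connected and let L₁, L₂ ⊆ ℝ with ℝ = L₁ ∪ L₂, where each L_i is a countable union of prime-closed sets. Then the family {L₁, L₂} is locally monitorable. -/
import Mathlib


/-!
Abstract setting for real Mazurkiewicz traces: `T` is the set ℝ of real
traces with the prefix partial order, `P : Set T` is the set 𝒫 of prime
traces, `cone p` is `pℝ = {t : p ≤ t}`.
-/

namespace MzTrace

variable {T : Type} [PartialOrder T]

/-- `cone p` models `pℝ`, the set of traces having `p` as a prefix. -/
def cone (p : T) : Set T := Set.Ici p

/-- A set of traces is prime-open (w.r.t. the set `P` of prime traces)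
if it is a union `⋃ {pℝ : p ∈ U}` for some `U ⊆ P`. -/
def PrimeOpen (P : Set T) (L : Set T) : Prop := ∃ U ⊆ P, L = ⋃ p ∈ U, cone p

/-- A set is prime-closed if its complement is prime-open. -/
def PrimeClosed (P : Set T) (L : Set T) : Prop := PrimeOpen P Lᶜ

/-- The prime closure of `L`: the intersection of all prime-closed supersets. -/
def primeClosure (P : Set T) (L : Set T) : Set T := ⋂₀ {K | PrimeClosed P K ∧ L ⊆ K}

/-- A set `C` of traces is coherent if it has a common upper bound (a trace
`t` with `C ⊆ pref(t)`). -/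
def Coherent (C : Set T) : Prop := BddAbove C

/-- `primePref P L` is `𝒫(L)`, the set of prime prefixes of elements of `L`. -/
def primePref (P : Set T) (L : Set T) : Set T := {p ∈ P | ∃ t ∈ L, p ≤ t}

/-- `L` is locally monitorable: for every prime `s` there is a prime `t`
with `{s,t}` coherent (i.e. `s ≤ tℝ`) and `tℝ ⊆ L` or `tℝ ⊆ Lᶜ`. -/
def LocallyMonitorable (P : Set T) (L : Set T) : Prop :=
  ∀ s ∈ P, ∃ t ∈ P, Coherent {s, t} ∧ (cone t ⊆ L ∨ cone t ⊆ Lᶜ)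

end MzTrace

namespace MzTrace

variable {T : Type} [PartialOrder T]

/-- A family `F` of subsets is locally monitorable (w.r.t. the primes `P`). -/
def FamilyLocallyMonitorable (P : Set T) (F : Set (Set T)) : Prop :=
  ∀ s ∈ P, ∃ t ∈ P, ∃ Li ∈ F, Coherent {s, t} ∧ cone t ⊆ Li

/-- Theorem thm:nix, case n = 2: let the distributed alphabet
be connected (key facts: coherent pairs of primes have common prime
extensions, and increasing chains of primes are bounded above in ℝ).
If `ℝ = L₁ ∪ L₂` and each `L_i` is a countable union of prime-closed sets,
then the family `{L₁, L₂}` is locally monitorable. -/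
theorem family_locallyMonitorable_of_countable_unions (P : Set T) (L₁ L₂ : Set T)
    (hconn : ∀ s ∈ P, ∀ t ∈ P, Coherent {s, t} → ∃ p ∈ P, s ≤ p ∧ t ≤ p)
    (hchain : ∀ f : ℕ → T, Monotone f → (∀ n, f n ∈ P) → BddAbove (Set.range f))
    (hcover : L₁ ∪ L₂ = Set.univ)
    (hσ1 : ∃ C : ℕ → Set T, (∀ n, PrimeClosed P (C n)) ∧ L₁ = ⋃ n, C n)
    (hσ2 : ∃ C : ℕ → Set T, (∀ n, PrimeClosed P (C n)) ∧ L₂ = ⋃ n, C n) :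
    FamilyLocallyMonitorable P {L₁, L₂} := by
  obtain ⟨C₁, hC₁, hL₁⟩ := hσ1
  obtain ⟨C₂, hC₂, hL₂⟩ := hσ2
  intro s hs
  by_contra hcon
  push_neg at hcon
  -- key step: from a prime t ≥ s and a prime-closed D not containing cone t,
  -- find a prime extension of t whose cone avoids D.
  have key : ∀ t, t ∈ P → s ≤ t → ∀ D : Set T, PrimeClosed P D → ¬ cone t ⊆ D →
      ∃ p, p ∈ P ∧ t ≤ p ∧ cone p ⊆ Dᶜ := by
    intro t ht hst D hD hnot
    obtain ⟨U, hU, hUc⟩ := hD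
    rw [Set.not_subset] at hnot
    obtain ⟨x, hxt, hxD⟩ := hnot
    have hx : x ∈ Dᶜ := hxD
    rw [hUc] at hx
    simp only [Set.mem_iUnion] at hx
    obtain ⟨q, hqU, hqx⟩ := hx
    have hq : q ∈ P := hU hqU
    have hcoh : Coherent ({t, q} : Set T) := by
      refine ⟨x, ?_⟩
      intro y hy
      rcases hy with hy | hy
      · subst hy; exact hxt
      · simp only [Set.mem_singleton_iff] at hy; subst hy; exact hqx
    obtain ⟨p, hp, htp, hqp⟩ := hconn t ht q hq hcoh
    refine ⟨p, hp, htp, ?_⟩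
    intro y hy
    have : y ∈ cone q := le_trans hqp hy
    rw [hUc]
    exact Set.mem_iUnion.2 ⟨q, Set.mem_iUnion.2 ⟨hqU, this⟩⟩
  -- enumerate the countably many prime-closed sets
  set D : ℕ → Set T := fun k => if k % 2 = 0 then C₁ (k / 2) else C₂ (k / 2) with hDdef
  have hDclosed : ∀ k, PrimeClosed P (D k) := by
    intro k; by_cases h : k % 2 = 0 <;> simp [hDdef, h, hC₁, hC₂]
  have hDnot : ∀ t, t ∈ P → s ≤ t → ∀ k, ¬ cone t ⊆ D k := by
    intro t ht hst k hsub
    have hcohst : Coherent ({s, t} : Set T) := by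
      refine ⟨t, ?_⟩
      intro y hy
      rcases hy with hy | hy
      · subst hy; exact hst
      · simp only [Set.mem_singleton_iff] at hy; subst hy; exact le_rfl
    by_cases h : k % 2 = 0
    · have h1 : cone t ⊆ L₁ := by
        rw [hL₁]; intro y hy
        exact Set.mem_iUnion.2 ⟨k / 2, by simpa [hDdef, h] using hsub hy⟩
      exact hcon t ht L₁ (Or.inl rfl) hcohst h1
    · have h2 : cone t ⊆ L₂ := by
        rw [hL₂]; intro y hy
        exact Set.mem_iUnion.2 ⟨k / 2, by simpa [hDdef, h] using hsub hy⟩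
      exact hcon t ht L₂ (Or.inr rfl) hcohst h2
  -- build the increasing chain of primes
  have step : ∀ (k : ℕ) (t : {x : T // x ∈ P ∧ s ≤ x}),
      ∃ p : {x : T // x ∈ P ∧ s ≤ x}, t.1 ≤ p.1 ∧ cone p.1 ⊆ (D k)ᶜ := by
    intro k t
    obtain ⟨p, hp, htp, hsub⟩ :=
      key t.1 t.2.1 t.2.2 (D k) (hDclosed k) (hDnot t.1 t.2.1 t.2.2 k)
    exact ⟨⟨p, hp, le_trans t.2.2 htp⟩, htp, hsub⟩
  choose F hFle hFsub using step
  let g : ℕ → {x : T // x ∈ P ∧ s ≤ x} :=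
    fun k => Nat.rec ⟨s, hs, le_rfl⟩ (fun k prev => F k prev) k
  have hgsucc : ∀ k, (g k).1 ≤ (g (k + 1)).1 := fun k => hFle k (g k)
  have hmono : Monotone fun k => (g k).1 := monotone_nat_of_le_succ hgsucc
  obtain ⟨b, hb⟩ := hchain (fun k => (g k).1) hmono (fun k => (g k).2.1)
  have hbk : ∀ k, b ∈ (D k)ᶜ := by
    intro k
    have : (g (k + 1)).1 ≤ b := hb ⟨k + 1, rfl⟩
    exact hFsub k (g k) this
  have hbL₁ : b ∉ L₁ := by
    rw [hL₁]
    intro hbmem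
    obtain ⟨n, hn⟩ := Set.mem_iUnion.1 hbmem
    exact hbk (2 * n) (by simpa [hDdef, Nat.mul_div_cancel_left n (by norm_num : 0 < 2)] using hn)
  have hbL₂ : b ∉ L₂ := by
    rw [hL₂]
    intro hbmem
    obtain ⟨n, hn⟩ := Set.mem_iUnion.1 hbmem
    have h21 : (2 * n + 1) % 2 = 1 := by omega
    have h22 : (2 * n + 1) / 2 = n := by omega
    exact hbk (2 * n + 1) (by simp [hDdef, h21, h22]; exact hn)
  have : b ∈ L₁ ∪ L₂ := hcover ▸ Set.mem_univ b
  rcases this with h | h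
  · exact hbL₁ h
  · exact hbL₂ h

end MzTrace
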